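/- For all natural numbers k ≤ n, the sum of binomial coefficients ∑_{j=0}^{k} C(n, j) is at most exp(k · log(e·n/k)). -/

import Mathlib

open Finset Real

/-- For all natural numbers `1 ≤ k ≤ n`, the sum of binomial coefficients
`∑_{j=0}^{k} C(n, j)` is at most `exp (k · log (e·n/k))`. -/
theorem stmt0 (n k : ℕ) (hk : 1 ≤ k) (hkn : k ≤ n) :
    ((∑ j ∈ Finset.range (k + 1), n.choose j : ℕ) : ℝ) ≤
      Real.exp ((k : ℝ) * Real.log (Real.exp 1 * n / k)) := by
  have hn : 0 < (n : ℝ) := by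
    have : 0 < n := lt_of_lt_of_le hk hkn
    exact_mod_cast this
  have hk0 : 0 < (k : ℝ) := by exact_mod_cast hk
  set x : ℝ := (k : ℝ) / n with hxdef
  have hx0 : 0 < x := div_pos hk0 hn
  have hx1 : x ≤ 1 := by
    rw [hxdef, div_le_one hn]
    exact_mod_cast hkn
  have key : (∑ j ∈ Finset.range (k + 1), (n.choose j : ℝ)) * x ^ k ≤ Real.exp k := by
    calc (∑ j ∈ Finset.range (k + 1), (n.choose j : ℝ)) * x ^ k
        = ∑ j ∈ Finset.range (k + 1), (n.choose j : ℝ) * x ^ k := by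
          rw [Finset.sum_mul]
      _ ≤ ∑ j ∈ Finset.range (k + 1), (n.choose j : ℝ) * x ^ j := by
          apply Finset.sum_le_sum
          intro j hj
          have hjk : j ≤ k := by
            have := Finset.mem_range.1 hj; omega
          exact mul_le_mul_of_nonneg_left
            (pow_le_pow_of_le_one hx0.le hx1 hjk) (by positivity)
      _ ≤ ∑ j ∈ Finset.range (n + 1), (n.choose j : ℝ) * x ^ j := by
          apply Finset.sum_le_sum_of_subset_of_nonneg
          · exact Finset.range_subset_range.2 (by omega)
          · intro j _ _; positivity
      _ = (x + 1) ^ n := by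
          rw [add_pow]
          apply Finset.sum_congr rfl
          intro j _
          rw [one_pow]
          ring
      _ ≤ (Real.exp x) ^ n := by
          apply pow_le_pow_left₀ (by positivity)
          linarith [Real.add_one_le_exp x]
      _ = Real.exp (n * x) := by rw [← Real.exp_nat_mul]
      _ = Real.exp k := by
          congr 1
          rw [hxdef]
          field_simp
  have hy : Real.exp ((k : ℝ) * Real.log (Real.exp 1 * n / k)) = Real.exp k / x ^ k := by
    have hypos : (0 : ℝ) < Real.exp 1 * n / k := by positivity
    rw [Real.exp_nat_mul, Real.exp_log hypos]
    have h1 : Real.exp 1 * n / k = Real.exp 1 / x := by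
      rw [hxdef]
      field_simp
    rw [h1, div_pow, ← Real.exp_nat_mul, mul_one]
  rw [hy, le_div_iff₀ (pow_pos hx0 k)]
  push_cast
  exact key
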